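/- With S_n defined in the free ℚ-algebra on noncommuting generators Ψ_1, Ψ_2, … by S_0 = 1 and S_n = (1/n) Σ_{k=1}^n S_{n−k} Ψ_k for n ≥ 1, one has for every n ≥ 1: S_n = Σ_I Ψ^I / (i_1 (i_1+i_2) ⋯ (i_1+⋯+i_r)), where the sum ranges over all compositions I = (i_1, …, i_r) of n and Ψ^I = Ψ_{i_1} Ψ_{i_2} ⋯ Ψ_{i_r}. -/
import Mathlib


/-- The noncommutative complete symmetric functions `S_n` in the free `ℚ`-algebra on the
noncommutative power sums `Ψ_1, Ψ_2, …` (the generator `k` of `FreeAlgebra ℚ ℕ`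
standing for `Ψ_k`), defined by `S_0 = 1` and `S_n = (1/n) Σ_{k=1}^n S_{n−k} Ψ_k`. -/
noncomputable def S : ℕ → FreeAlgebra ℚ ℕ
  | 0 => 1
  | n + 1 =>
      ((n + 1 : ℚ))⁻¹ • ∑ k ∈ Finset.range (n + 1), S (n - k) * FreeAlgebra.ι ℚ (k + 1)
  decreasing_by exact Nat.lt_succ_of_le (Nat.sub_le n k)

/-- `Ψ^I = Ψ_{i_1} Ψ_{i_2} ⋯ Ψ_{i_r}`. -/
noncomputable def psi (I : List ℕ) : FreeAlgebra ℚ ℕ :=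
  (I.map (FreeAlgebra.ι ℚ)).prod

/-- `π_u(I) = i_1 (i_1+i_2) ⋯ (i_1+⋯+i_r)`, the product of the partial sums of `I`. -/
def partialSumsProd (I : List ℕ) : ℕ :=
  ((List.range I.length).map fun k => (I.take (k + 1)).sum).prod

/-- The finset of compositions of `n`. -/
def comps : ℕ → Finset (List ℕ)
  | 0 => {([] : List ℕ)}
  | n + 1 =>
      (Finset.range (n + 1)).biUnion fun k => (comps (n - k)).image (· ++ [k + 1])
  decreasing_by exact Nat.lt_succ_of_le (Nat.sub_le n k)

lemma mem_comps : ∀ n I, I ∈ comps n ↔ (∀ i ∈ I, 0 < i) ∧ I.sum = n := by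
  intro n
  induction n using Nat.strong_induction_on with
  | _ n ih =>
    match n with
    | 0 =>
      intro I
      simp only [comps, Finset.mem_singleton]
      constructor
      · rintro rfl; simp
      · rintro ⟨h1, h2⟩
        cases I with
        | nil => rfl
        | cons a l =>
          exfalso
          have ha := h1 a (by simp)
          simp [List.sum_cons] at h2
          omega
    | n + 1 =>
      intro I
      rw [comps]
      simp only [Finset.mem_biUnion, Finset.mem_range, Finset.mem_image]
      constructor
      · rintro ⟨k, hk, J, hJ, rfl⟩
        obtain ⟨hJ1, hJ2⟩ := (ih (n - k) (Nat.lt_succ_of_le (Nat.sub_le n k)) J).mp hJ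
        constructor
        · intro i hi
          rcases List.mem_append.mp hi with h | h
          · exact hJ1 i h
          · simp at h; omega
        · simp [hJ2]; omega
      · rintro ⟨h1, h2⟩
        rcases List.eq_nil_or_concat I with rfl | ⟨J, a, rfl⟩
        · simp at h2
        · rw [List.concat_eq_append] at h1 h2 ⊢
          have ha : 0 < a := h1 a (by simp)
          have hsum : J.sum + a = n + 1 := by simpa using h2
          have haub : a ≤ n + 1 := by omega
          refine ⟨a - 1, by omega, J, ?_, by congr 1; simp; omega⟩
          rw [ih (n - (a - 1)) (Nat.lt_succ_of_le (Nat.sub_le n (a - 1)))]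
          constructor
          · intro i hi; exact h1 i (List.mem_append.mpr (Or.inl hi))
          · omega

lemma psi_concat (J : List ℕ) (a : ℕ) : psi (J ++ [a]) = psi J * FreeAlgebra.ι ℚ a := by
  simp [psi]

lemma partialSumsProd_concat (J : List ℕ) (a : ℕ) :
    partialSumsProd (J ++ [a]) = partialSumsProd J * (J.sum + a) := by
  unfold partialSumsProd
  rw [List.length_append, List.length_singleton, List.range_succ, List.map_append,
    List.prod_append]
  congr 1
  · congr 1
    refine List.map_congr_left fun k hk => ?_
    rw [List.mem_range] at hk
    rw [List.take_append_of_le_length (by omega)]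
  · simp [List.take_of_length_le (by simp : (J ++ [a]).length ≤ J.length + 1)]

lemma S_eq_sum_comps : ∀ n, S n = ∑ I ∈ comps n, ((partialSumsProd I : ℚ))⁻¹ • psi I := by
  intro n
  induction n using Nat.strong_induction_on with
  | _ n ih =>
    match n with
    | 0 => simp [S, comps, partialSumsProd, psi]
    | n + 1 =>
      rw [S, comps]
      rw [Finset.sum_biUnion]
      · have key : ∀ k ∈ Finset.range (n + 1),
            (∑ I ∈ (comps (n - k)).image (· ++ [k + 1]),
              ((partialSumsProd I : ℚ))⁻¹ • psi I)
            = ((n + 1 : ℚ))⁻¹ • (S (n - k) * FreeAlgebra.ι ℚ (k + 1)) := by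
          intro k hk
          rw [Finset.mem_range] at hk
          rw [Finset.sum_image (fun x _ y _ h => by simpa using h)]
          rw [ih (n - k) (Nat.lt_succ_of_le (Nat.sub_le n k)), Finset.sum_mul,
            Finset.smul_sum]
          refine Finset.sum_congr rfl fun J hJ => ?_
          obtain ⟨-, hJ2⟩ := (mem_comps (n - k) J).mp hJ
          rw [partialSumsProd_concat, psi_concat, hJ2]
          have : n - k + (k + 1) = n + 1 := by omega
          rw [this]
          push_cast
          rw [mul_inv, mul_comm, mul_smul, smul_mul_assoc]
        rw [Finset.sum_congr rfl key, ← Finset.smul_sum]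
      · intro k hk l hl hkl
        simp only [Function.onFun]
        rw [Finset.disjoint_left]
        rintro I hI hI'
        simp only [Finset.mem_image] at hI hI'
        obtain ⟨J, -, rfl⟩ := hI
        obtain ⟨J', -, hJ'⟩ := hI'
        apply hkl
        have := congrArg List.getLast? hJ'
        rw [List.getLast?_concat, List.getLast?_concat] at this
        simpa using this.symm

/-- `S_n = Σ_{I ⊨ n} Ψ^I / (i_1 (i_1+i_2) ⋯ (i_1+⋯+i_r))`. -/
theorem complete_in_terms_of_power_sums (n : ℕ) (hn : 1 ≤ n) :
    S n = ∑ᶠ I ∈ {I : List ℕ | (∀ i ∈ I, 0 < i) ∧ I.sum = n},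
      ((partialSumsProd I : ℚ))⁻¹ • psi I := by
  have hset : {I : List ℕ | (∀ i ∈ I, 0 < i) ∧ I.sum = n} = ↑(comps n) := by
    ext I
    simp [mem_comps n I]
  rw [hset, finsum_mem_coe_finset, S_eq_sum_comps]
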